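/- Suppose the potential outcomes and reference outcomes are generated by the structural equations Y⁽⁰⁾_{i,s} = ϱ_s + f(G_i, X_i) + ε_{i,s} and F_{i,t} = ρ_t + g(G_i, Z_i) + ε'_{i,t} for i = 1, …, J+1, s = 1, …, S, t = 1, …, T, where G_i = 1 if i = 1 and G_i = 0 otherwise, X₁, …, X_{J+1} are i.i.d. with common law P_X, Z₁, …, Z_{J+1} are i.i.d. with common law P_Z, the noise variables ε_{i,s} and ε'_{i,t} have mean zero, and E[f(1, X₁) − f(0, X₁)] = E[g(1, Z₁) − g(0, Z₁)] (with all relevant integrability). Then the linear equi-confounding condition holds: E[Y₁⁽⁰⁾] − (1/J)·Σ_{i=2}^{J+1} E[Yᵢ⁽⁰⁾] = E[F₁] − (1/J)·Σ_{i=2}^{J+1} E[Fᵢ], where Yᵢ⁽⁰⁾ = (1/S)·Σ_{s=1}^S Y⁽⁰⁾_{i,s} and Fᵢ = (1/T)·Σ_{t=1}^T F_{i,t}. -/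

import Mathlib

open MeasureTheory ProbabilityTheory

/-- **Example 3.1.** If the potential outcomes and reference outcomes are generated by
the structural equations `Y⁽⁰⁾_{i,s} = ϱ_s + f(G_i, X_i) + ε_{i,s}` and
`F_{i,t} = ρ_t + g(G_i, Z_i) + ε'_{i,t}` with i.i.d. covariates, mean-zero noise, and
`E[f(1,X₁) − f(0,X₁)] = E[g(1,Z₁) − g(0,Z₁)]`, then the linear equi-confounding
condition holds for the time-averaged outcomes. -/

lemma aux_law_integral {Ω 𝒳 : Type*} [MeasureSpace Ω] [MeasurableSpace 𝒳]
    (X1 Xi : Ω → 𝒳) (h1 : Measurable X1) (hi : Measurable Xi)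
    (hlaw : Measure.map Xi (ℙ : Measure Ω) = Measure.map X1 ℙ)
    (φ : 𝒳 → ℝ) (hφ : Measurable φ)
    (hint : Integrable (fun ω => φ (X1 ω)) ℙ) :
    Integrable (fun ω => φ (Xi ω)) ℙ ∧ (∫ ω, φ (Xi ω)) = ∫ ω, φ (X1 ω) := by
  have e1 : Integrable φ (Measure.map X1 ℙ) :=
    (integrable_map_measure hφ.aestronglyMeasurable h1.aemeasurable).mpr hint
  have e2 : Integrable (fun ω => φ (Xi ω)) ℙ :=
    (integrable_map_measure hφ.aestronglyMeasurable hi.aemeasurable).mp (hlaw ▸ e1)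
  refine ⟨e2, ?_⟩
  rw [← integral_map hi.aemeasurable hφ.aestronglyMeasurable, hlaw,
    integral_map h1.aemeasurable hφ.aestronglyMeasurable]

/-- avg expectation helper -/
lemma aux_avg {Ω : Type*} [MeasureSpace Ω] [IsProbabilityMeasure (ℙ : Measure Ω)]
    (S : ℕ) (hS : 1 ≤ S) (Y : ℕ → Ω → ℝ) (ϱ : ℕ → ℝ) (C : Ω → ℝ) (ε : ℕ → Ω → ℝ)
    (hC : Integrable C ℙ)
    (hε : ∀ s ∈ Finset.Icc 1 S, Integrable (ε s) ℙ)
    (hεm : ∀ s ∈ Finset.Icc 1 S, (∫ ω, ε s ω) = 0)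
    (hYeq : ∀ s ∈ Finset.Icc 1 S, ∀ ω, Y s ω = ϱ s + C ω + ε s ω) :
    (∫ ω, (1 / (S : ℝ)) * ∑ s ∈ Finset.Icc 1 S, Y s ω)
      = (1 / (S : ℝ)) * ∑ s ∈ Finset.Icc 1 S, ϱ s + ∫ ω, C ω := by
  have hYint : ∀ s ∈ Finset.Icc 1 S, Integrable (Y s) ℙ := by
    intro s hs
    have : Y s = fun ω => ϱ s + C ω + ε s ω := funext (hYeq s hs)
    rw [this]
    exact (((integrable_const (ϱ s)).add hC).add (hε s hs))
  have hYval : ∀ s ∈ Finset.Icc 1 S, (∫ ω, Y s ω) = ϱ s + ∫ ω, C ω := by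
    intro s hs
    have : Y s = fun ω => ϱ s + C ω + ε s ω := funext (hYeq s hs)
    have hc : Integrable (fun ω => ϱ s + C ω) ℙ := (integrable_const (ϱ s)).add hC
    rw [this, integral_add hc (hε s hs),
      integral_add (integrable_const (ϱ s)) hC, hεm s hs, integral_const]
    simp
  rw [integral_const_mul, integral_finset_sum _ hYint,
    Finset.sum_congr rfl hYval, Finset.sum_add_distrib, Finset.sum_const,
    Nat.card_Icc, mul_add]
  have hS0 : (S : ℝ) ≠ 0 := by positivity
  simp only [nsmul_eq_mul]
  have : (↑(S + 1 - 1) : ℝ) = (S : ℝ) := by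
    norm_num
  rw [this]
  field_simp

theorem structural_model_implies_linear_equiconfounding
    {Ω : Type*} [MeasureSpace Ω] [IsProbabilityMeasure (ℙ : Measure Ω)]
    {𝒳 𝒵 : Type*} [MeasurableSpace 𝒳] [MeasurableSpace 𝒵]
    (J S T : ℕ) (hJ : 1 ≤ J) (hS : 1 ≤ S) (hT : 1 ≤ T)
    (X : ℕ → Ω → 𝒳) (Z : ℕ → Ω → 𝒵)
    (PX : Measure 𝒳) (PZ : Measure 𝒵)
    (f : ℕ → 𝒳 → ℝ) (g : ℕ → 𝒵 → ℝ)
    (ϱ ρ : ℕ → ℝ)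
    (ε ε' : ℕ → ℕ → Ω → ℝ)
    (Y0 F : ℕ → ℕ → Ω → ℝ)
    (hfmeas : ∀ b, Measurable (f b)) (hgmeas : ∀ b, Measurable (g b))
    (hXmeas : ∀ i ∈ Finset.Icc 1 (J + 1), Measurable (X i))
    (hZmeas : ∀ i ∈ Finset.Icc 1 (J + 1), Measurable (Z i))
    -- the covariates X₁, …, X_{J+1} are i.i.d. with common law P_X
    (hXindep : iIndepFun
      (fun i : (Finset.Icc 1 (J + 1) : Finset ℕ) => X (i : ℕ)) ℙ)
    (hXlaw : ∀ i ∈ Finset.Icc 1 (J + 1), Measure.map (X i) ℙ = PX)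
    -- the covariates Z₁, …, Z_{J+1} are i.i.d. with common law P_Z
    (hZindep : iIndepFun
      (fun i : (Finset.Icc 1 (J + 1) : Finset ℕ) => Z (i : ℕ)) ℙ)
    (hZlaw : ∀ i ∈ Finset.Icc 1 (J + 1), Measure.map (Z i) ℙ = PZ)
    -- mean-zero integrable noise
    (hεint : ∀ i ∈ Finset.Icc 1 (J + 1), ∀ s ∈ Finset.Icc 1 S, Integrable (ε i s) ℙ)
    (hεmean : ∀ i ∈ Finset.Icc 1 (J + 1), ∀ s ∈ Finset.Icc 1 S, ∫ ω, ε i s ω = 0)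
    (hε'int : ∀ i ∈ Finset.Icc 1 (J + 1), ∀ t ∈ Finset.Icc 1 T, Integrable (ε' i t) ℙ)
    (hε'mean : ∀ i ∈ Finset.Icc 1 (J + 1), ∀ t ∈ Finset.Icc 1 T, ∫ ω, ε' i t ω = 0)
    -- integrability of the structural terms
    (hf1int : Integrable (fun ω => f 1 (X 1 ω)) ℙ)
    (hf0int : Integrable (fun ω => f 0 (X 1 ω)) ℙ)
    (hg1int : Integrable (fun ω => g 1 (Z 1 ω)) ℙ)
    (hg0int : Integrable (fun ω => g 0 (Z 1 ω)) ℙ)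
    -- E[f(1, X₁) − f(0, X₁)] = E[g(1, Z₁) − g(0, Z₁)]
    (hmoment :
      (∫ ω, f 1 (X 1 ω)) - (∫ ω, f 0 (X 1 ω))
        = (∫ ω, g 1 (Z 1 ω)) - (∫ ω, g 0 (Z 1 ω)))
    -- structural equations, with G_i = 1 if i = 1 and G_i = 0 otherwise
    (hY0eq : ∀ i ∈ Finset.Icc 1 (J + 1), ∀ s ∈ Finset.Icc 1 S, ∀ ω,
      Y0 i s ω = ϱ s + f (if i = 1 then 1 else 0) (X i ω) + ε i s ω)
    (hFeq : ∀ i ∈ Finset.Icc 1 (J + 1), ∀ t ∈ Finset.Icc 1 T, ∀ ω,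
      F i t ω = ρ t + g (if i = 1 then 1 else 0) (Z i ω) + ε' i t ω) :
    (∫ ω, (1 / (S : ℝ)) * ∑ s ∈ Finset.Icc 1 S, Y0 1 s ω)
        - (1 / (J : ℝ)) * ∑ i ∈ Finset.Icc 2 (J + 1),
            ∫ ω, (1 / (S : ℝ)) * ∑ s ∈ Finset.Icc 1 S, Y0 i s ω
      = (∫ ω, (1 / (T : ℝ)) * ∑ t ∈ Finset.Icc 1 T, F 1 t ω)
        - (1 / (J : ℝ)) * ∑ i ∈ Finset.Icc 2 (J + 1),
            ∫ ω, (1 / (T : ℝ)) * ∑ t ∈ Finset.Icc 1 T, F i t ω  := by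
  classical
  have h1mem : (1:ℕ) ∈ Finset.Icc 1 (J+1) := by
    simp [Finset.mem_Icc]
  have hsubset : ∀ i ∈ Finset.Icc 2 (J+1), i ∈ Finset.Icc 1 (J+1) ∧ i ≠ 1 := by
    intro i hi
    simp only [Finset.mem_Icc] at hi ⊢
    omega
  -- expectations of f terms
  have hfX : ∀ b, Integrable (fun ω => f b (X 1 ω)) ℙ →
      ∀ i ∈ Finset.Icc 1 (J+1),
      Integrable (fun ω => f b (X i ω)) ℙ ∧ (∫ ω, f b (X i ω)) = ∫ ω, f b (X 1 ω) := by
    intro b hb i hi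
    exact aux_law_integral (X 1) (X i) (hXmeas 1 h1mem) (hXmeas i hi)
      (by rw [hXlaw i hi, hXlaw 1 h1mem]) (f b) (hfmeas b) hb
  have hgZ : ∀ b, Integrable (fun ω => g b (Z 1 ω)) ℙ →
      ∀ i ∈ Finset.Icc 1 (J+1),
      Integrable (fun ω => g b (Z i ω)) ℙ ∧ (∫ ω, g b (Z i ω)) = ∫ ω, g b (Z 1 ω) := by
    intro b hb i hi
    exact aux_law_integral (Z 1) (Z i) (hZmeas 1 h1mem) (hZmeas i hi)
      (by rw [hZlaw i hi, hZlaw 1 h1mem]) (g b) (hgmeas b) hb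
  -- expectation of averaged Y0
  have hEY : ∀ i ∈ Finset.Icc 1 (J+1),
      (∫ ω, (1 / (S : ℝ)) * ∑ s ∈ Finset.Icc 1 S, Y0 i s ω)
        = (1 / (S : ℝ)) * ∑ s ∈ Finset.Icc 1 S, ϱ s
          + ∫ ω, f (if i = 1 then 1 else 0) (X i ω) := by
    intro i hi
    refine aux_avg S hS (Y0 i) ϱ (fun ω => f (if i = 1 then 1 else 0) (X i ω)) (ε i)
      ?_ (hεint i hi) (hεmean i hi) (hY0eq i hi)
    by_cases h : i = 1
    · simp only [h, if_pos rfl]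
      exact (hfX 1 hf1int 1 h1mem).1
    · simp only [if_neg h]
      exact (hfX 0 hf0int i hi).1
  have hEF : ∀ i ∈ Finset.Icc 1 (J+1),
      (∫ ω, (1 / (T : ℝ)) * ∑ t ∈ Finset.Icc 1 T, F i t ω)
        = (1 / (T : ℝ)) * ∑ t ∈ Finset.Icc 1 T, ρ t
          + ∫ ω, g (if i = 1 then 1 else 0) (Z i ω) := by
    intro i hi
    refine aux_avg T hT (F i) ρ (fun ω => g (if i = 1 then 1 else 0) (Z i ω)) (ε' i)
      ?_ (hε'int i hi) (hε'mean i hi) (hFeq i hi)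
    by_cases h : i = 1
    · simp only [h, if_pos rfl]
      exact (hgZ 1 hg1int 1 h1mem).1
    · simp only [if_neg h]
      exact (hgZ 0 hg0int i hi).1
  set A := (1 / (S : ℝ)) * ∑ s ∈ Finset.Icc 1 S, ϱ s with hA
  set B := (1 / (T : ℝ)) * ∑ t ∈ Finset.Icc 1 T, ρ t with hB
  have hEY1 : (∫ ω, (1 / (S : ℝ)) * ∑ s ∈ Finset.Icc 1 S, Y0 1 s ω)
      = A + ∫ ω, f 1 (X 1 ω) := by
    rw [hEY 1 h1mem]; simp
  have hEF1 : (∫ ω, (1 / (T : ℝ)) * ∑ t ∈ Finset.Icc 1 T, F 1 t ω)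
      = B + ∫ ω, g 1 (Z 1 ω) := by
    rw [hEF 1 h1mem]; simp
  have hEYi : ∀ i ∈ Finset.Icc 2 (J+1),
      (∫ ω, (1 / (S : ℝ)) * ∑ s ∈ Finset.Icc 1 S, Y0 i s ω)
        = A + ∫ ω, f 0 (X 1 ω) := by
    intro i hi
    obtain ⟨hi', hne⟩ := hsubset i hi
    rw [hEY i hi', if_neg hne, (hfX 0 hf0int i hi').2]
  have hEFi : ∀ i ∈ Finset.Icc 2 (J+1),
      (∫ ω, (1 / (T : ℝ)) * ∑ t ∈ Finset.Icc 1 T, F i t ω)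
        = B + ∫ ω, g 0 (Z 1 ω) := by
    intro i hi
    obtain ⟨hi', hne⟩ := hsubset i hi
    rw [hEF i hi', if_neg hne, (hgZ 0 hg0int i hi').2]
  rw [hEY1, hEF1, Finset.sum_congr rfl hEYi, Finset.sum_congr rfl hEFi,
    Finset.sum_const, Finset.sum_const, Nat.card_Icc]
  have hcard : (↑(J + 1 + 1 - 2) : ℝ) = (J : ℝ) := by push_cast [show J+1+1-2 = J from by omega]; ring
  simp only [nsmul_eq_mul, hcard]
  have hJ0 : (J : ℝ) ≠ 0 := by positivity
  have : (1 / (J : ℝ)) * ((J : ℝ) * (A + ∫ ω, f 0 (X 1 ω)))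
      = A + ∫ ω, f 0 (X 1 ω) := by field_simp
  rw [this]
  have : (1 / (J : ℝ)) * ((J : ℝ) * (B + ∫ ω, g 0 (Z 1 ω)))
      = B + ∫ ω, g 0 (Z 1 ω) := by field_simp
  rw [this]
  linarith [hmoment]
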